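/- Let m1, m2 be integers with m1 ≥ 2 and m2 ≥ 2, and set s := (1/2)·(1 − √(m2/(m1+m2))). Then A(m1, m2) := ((m1−1)/(m1+m2)) · ((m1+m2+1)/(m1+m2)) · (1/s) ≥ 2. -/

import Mathlib

open Real

/-- for integers `m1, m2 ≥ 2`, with
`s = (1/2)·(1 − √(m2/(m1+m2)))` (the value of `sin²θ₁` for the minimal isoparametric
hypersurface), the quantity
`A(m1, m2) = ((m1−1)/(m1+m2))·((m1+m2+1)/(m1+m2))·(1/s)` is at least `2`. -/
theorem A_ge_two (m1 m2 : ℕ) (hm1 : 2 ≤ m1) (hm2 : 2 ≤ m2) :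
    2 ≤ (((m1 : ℝ) - 1) / ((m1 : ℝ) + m2)) * (((m1 : ℝ) + m2 + 1) / ((m1 : ℝ) + m2)) *
        (1 / ((1 / 2) * (1 - Real.sqrt ((m2 : ℝ) / ((m1 : ℝ) + m2))))) := by
  have hA : (2:ℝ) ≤ (m1:ℝ) := by exact_mod_cast hm1
  have hB : (2:ℝ) ≤ (m2:ℝ) := by exact_mod_cast hm2
  set A := (m1:ℝ) with hAdef
  set B := (m2:ℝ) with hBdef
  have hM : (0:ℝ) < A + B := by linarith
  set t := Real.sqrt (B/(A+B)) with htdef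
  have ht0 : 0 ≤ t := Real.sqrt_nonneg _
  have ht2 : t^2 = B/(A+B) := Real.sq_sqrt (by positivity)
  have htAB : t^2 * (A+B) = B := by rw [ht2]; field_simp
  have ht1 : t < 1 := by
    by_contra h
    push_neg at h
    have : (1:ℝ) ≤ t^2 := by nlinarith
    have hlt : B/(A+B) < 1 := (div_lt_one hM).mpr (by linarith)
    linarith [ht2 ▸ this]
  -- key squared inequality
  have ha : (0:ℝ) ≤ A - 2 := by linarith
  have hb : (0:ℝ) ≤ B - 2 := by linarith
  have hsq : (B*(A+B)+B+1)^2 ≤ B*(A+B)^3 := by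
    nlinarith [ha, hb, mul_nonneg ha hb, mul_nonneg ha ha, mul_nonneg hb hb,
      mul_nonneg (mul_nonneg ha ha) hb, mul_nonneg (mul_nonneg ha hb) hb,
      mul_nonneg (mul_nonneg ha ha) ha, mul_nonneg (mul_nonneg hb hb) hb,
      mul_nonneg (mul_nonneg (mul_nonneg ha ha) ha) hb,
      mul_nonneg (mul_nonneg (mul_nonneg ha hb) hb) hb]
  have hy2 : (t*(A+B)^2)^2 = B*(A+B)^3 := by
    rw [mul_pow, ht2]; field_simp
  have hkey : B*(A+B)+B+1 ≤ t*(A+B)^2 := by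
    have h1 : B*(A+B)+B+1 = Real.sqrt ((B*(A+B)+B+1)^2) := (Real.sqrt_sq (by positivity)).symm
    have h2 : Real.sqrt ((t*(A+B)^2)^2) = t*(A+B)^2 :=
      Real.sqrt_sq (by positivity)
    rw [h1, ← h2]
    exact Real.sqrt_le_sqrt (by rw [hy2]; exact hsq)
  have hs : 0 < (1/2:ℝ) * (1 - t) := by nlinarith
  have hEq : ((A - 1) / (A + B)) * ((A + B + 1) / (A + B)) *
        (1 / ((1 / 2) * (1 - t))) = ((A-1)*(A+B+1)) / ((A+B)^2 * ((1/2)*(1-t))) := by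
    field_simp
  rw [hEq, le_div_iff₀ (by positivity)]
  nlinarith [hkey]
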